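/- Let 0 < γ' < γ < 2, 0 < r' < r ≤ ∞, and let M : ℕ → ℝ be a sequence of positive reals with M_0 = 1, M increasing and logarithmically convex. If f ∈ A^∞(S_{γ,r}) satisfies |f(z)| ≤ c_1·h_M(c_2·|z|) for all z ∈ S_{γ,r}, for some constants c_1, c_2 > 0, then f restricted to S_{γ',r'} belongs to A_M(S_{γ',r'}) and f is flat on S_{γ',r'}: f^{(j)}(z) → 0 as z → 0 in S_{γ',r'} for every j ∈ ℕ. -/

import Mathlib

open Set Filter Topology Complex ENNReal

noncomputable section

/-- The sector `S_{γ,r}` of the complex plane: `0 < |z| < r`, `|arg z| < γπ/2`. -/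
def Sector (γ : ℝ) (r : ℝ≥0∞) : Set ℂ :=
  {z : ℂ | z ≠ 0 ∧ |Complex.arg z| < γ * Real.pi / 2 ∧ (‖z‖₊ : ℝ≥0∞) < r}

/-- `f ∈ A^∞(S_{γ,r})`: `f` is holomorphic on the sector and all its derivatives
are bounded there. -/
def AInfty (γ : ℝ) (r : ℝ≥0∞) (f : ℂ → ℂ) : Prop :=
  DifferentiableOn ℂ f (Sector γ r) ∧
  ∀ j : ℕ, ∃ B : ℝ, ∀ z ∈ Sector γ r, ‖iteratedDeriv j f z‖ ≤ B

/-- `f ∈ A_M(S_{γ,r})`: `f ∈ A^∞(S_{γ,r})` with Denjoy–Carleman bounds. -/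
def AClass (M : ℕ → ℝ) (γ : ℝ) (r : ℝ≥0∞) (f : ℂ → ℂ) : Prop :=
  AInfty γ r f ∧
  ∃ C > (0:ℝ), ∃ σ > (0:ℝ), ∀ (j : ℕ), ∀ z ∈ Sector γ r,
    ‖iteratedDeriv j f z‖ ≤ C * σ ^ j * (Nat.factorial j : ℝ) * M j

/-- `f` is flat on `S_{γ,r}`: every derivative tends to `0` at the vertex. -/
def FlatOn (γ : ℝ) (r : ℝ≥0∞) (f : ℂ → ℂ) : Prop :=
  ∀ j : ℕ, Tendsto (iteratedDeriv j f) (𝓝[Sector γ r] 0) (𝓝 0)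

/-- The function `h_M` associated with the sequence `M`. -/
def hFun (M : ℕ → ℝ) (t : ℝ) : ℝ := if t = 0 then 0 else ⨅ j : ℕ, t ^ j * M j


/-- Cauchy estimate for iterated derivatives. -/
lemma cauchy_deriv_est {f : ℂ → ℂ} {s : Set ℂ} {z : ℂ} {R B : ℝ} (hR : 0 < R)
    (hs : Metric.closedBall z R ⊆ s) (hd : DifferentiableOn ℂ f s)
    (hB : ∀ w ∈ Metric.closedBall z R, ‖f w‖ ≤ B) (j : ℕ) :
    ‖iteratedDeriv j f z‖ ≤ (Nat.factorial j : ℝ) * B / R ^ j := by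
  have hB0 : 0 ≤ B := (norm_nonneg _).trans (hB z (Metric.mem_closedBall_self hR.le))
  set Rnn : NNReal := ⟨R, hR.le⟩ with hRnn
  have hd' : DifferentiableOn ℂ f (Metric.closedBall z Rnn) := hd.mono hs
  have hps := hd'.hasFPowerSeriesOnBall (show (0:NNReal) < Rnn from hR)
  have h1 : (Nat.factorial j) • ((cauchyPowerSeries f z Rnn j) fun _ => (1:ℂ))
      = iteratedFDeriv ℂ j f z fun _ => 1 := hps.factorial_smul (y := (1:ℂ)) j
  rw [iteratedDeriv_eq_iteratedFDeriv, ← h1, nsmul_eq_mul, norm_mul]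
  have hnorm : ‖((Nat.factorial j : ℂ))‖ = (Nat.factorial j : ℝ) := by
    simp
  rw [hnorm]
  have h2 : ‖(cauchyPowerSeries f z Rnn j) fun _ => (1:ℂ)‖ ≤ ‖cauchyPowerSeries f z Rnn j‖ := by
    have := (cauchyPowerSeries f z Rnn j).le_opNorm fun _ => (1:ℂ)
    simpa using this
  have hc : Continuous fun θ : ℝ => f (circleMap z Rnn θ) := by
    apply hd.continuousOn.comp_continuous (continuous_circleMap z Rnn)
    intro θ
    exact hs (Metric.sphere_subset_closedBall (circleMap_mem_sphere z hR.le θ))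
  have h3 : ‖cauchyPowerSeries f z Rnn j‖ ≤ B * |(Rnn:ℝ)|⁻¹ ^ j := by
    refine (norm_cauchyPowerSeries_le f z Rnn j).trans ?_
    apply mul_le_mul_of_nonneg_right _ (by positivity)
    have hint : (∫ θ : ℝ in (0)..2 * Real.pi, ‖f (circleMap z Rnn θ)‖)
        ≤ ∫ _ : ℝ in (0)..2 * Real.pi, B := by
      apply intervalIntegral.integral_mono_on Real.two_pi_pos.le
      · exact (hc.norm.intervalIntegrable _ _)
      · exact intervalIntegrable_const
      · intro θ _
        exact hB _ (Metric.sphere_subset_closedBall (circleMap_mem_sphere z hR.le θ))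
    rw [intervalIntegral.integral_const, smul_eq_mul, sub_zero] at hint
    calc (2 * Real.pi)⁻¹ * ∫ θ : ℝ in (0)..2 * Real.pi, ‖f (circleMap z Rnn θ)‖
        ≤ (2 * Real.pi)⁻¹ * (2 * Real.pi * B) := by
          gcongr
      _ = B := by field_simp
  have h4 : |(Rnn : ℝ)| = R := abs_of_pos hR
  calc (Nat.factorial j : ℝ) * ‖(cauchyPowerSeries f z Rnn j) fun _ => (1:ℂ)‖
      ≤ (Nat.factorial j : ℝ) * (B * |(Rnn:ℝ)|⁻¹ ^ j) := by
        gcongr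
        exact h2.trans h3
    _ = (Nat.factorial j : ℝ) * B / R ^ j := by
        rw [h4, inv_pow]
        ring

lemma hFun_le_aux {M : ℕ → ℝ} (hpos : ∀ j, 0 < M j) {t s : ℝ} (ht : 0 < t) (hts : t ≤ s)
    (k : ℕ) : hFun M t ≤ s ^ k * M k := by
  rw [hFun, if_neg ht.ne']
  refine (ciInf_le ⟨0, ?_⟩ k).trans ?_
  · rintro x ⟨j, rfl⟩
    exact mul_nonneg (pow_nonneg ht.le _) (hpos _).le
  · exact mul_le_mul_of_nonneg_right (pow_le_pow_left₀ ht.le hts k) (hpos k).le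

/-- Conversely, a function of `A^∞(S_{γ,r})` satisfying `|f(z)| ≤ c₁·h_M(c₂·|z|)`
belongs to `A_M(S_{γ',r'})` for `γ' < γ`, `r' < r`, and is flat there. -/
theorem AClass_of_flat_bound
    (γ γ' : ℝ) (hγ'0 : 0 < γ') (hγ' : γ' < γ) (hγ2 : γ < 2)
    (r r' : ℝ≥0∞) (hr'0 : 0 < r') (hr' : r' < r)
    (M : ℕ → ℝ) (hpos : ∀ j, 0 < M j) (hM0 : M 0 = 1) (hmono : Monotone M)
    (hlc : ∀ j : ℕ, (M (j+1))^2 ≤ M j * M (j+2))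
    (f : ℂ → ℂ) (hf : AInfty γ r f)
    (c₁ c₂ : ℝ) (hc₁ : 0 < c₁) (hc₂ : 0 < c₂)
    (hbd : ∀ z ∈ Sector γ r, ‖f z‖ ≤ c₁ * hFun M (c₂ * ‖z‖)) :
    AClass M γ' r' f ∧ FlatOn γ' r' f := by
  have hπ := Real.pi_pos
  set α' := γ' * Real.pi / 2 with hα'def
  set α := γ * Real.pi / 2 with hαdef
  have hα'0 : 0 < α' := by rw [hα'def]; positivity
  have hα'α : α' < α := by
    rw [hα'def, hαdef]
    have := mul_lt_mul_of_pos_right hγ' hπ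
    linarith
  have hαπ : α < Real.pi := by
    rw [hαdef]
    nlinarith
  set ε := min (α - α') (Real.pi / 4) with hεdef
  have hε0 : 0 < ε := lt_min (by linarith) (by positivity)
  have hεlt : ε < Real.pi / 2 := (min_le_right _ _).trans_lt (by linarith)
  have hεα : ε ≤ α - α' := min_le_left _ _
  set τ := Real.tan ε with hτdef
  have hτ0 : 0 < τ := Real.tan_pos_of_pos_of_lt_pi_div_two hε0 hεlt
  have hτε : Real.arctan τ = ε := Real.arctan_tan (by linarith) hεlt
  set δ₁ := τ / (1 + τ) with hδ₁def
  have hδ₁0 : 0 < δ₁ := by positivity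
  have hδ₁1 : δ₁ < 1 := by rw [hδ₁def, div_lt_one (by positivity)]; linarith
  have hr'top : r' ≠ ⊤ := hr'.ne_top
  set R' := r'.toReal with hR'def
  have hR'0 : 0 < R' := ENNReal.toReal_pos hr'0.ne' hr'top
  obtain ⟨δ, hδ0, hδδ₁, hδr⟩ : ∃ δ : ℝ, 0 < δ ∧ δ ≤ δ₁ ∧
      ∀ x : ℝ, 0 ≤ x → x < R' → ENNReal.ofReal ((1 + δ) * x) < r := by
    rcases eq_or_ne r ⊤ with h | h
    · exact ⟨δ₁, hδ₁0, le_rfl, fun x _ _ => h ▸ ENNReal.ofReal_lt_top⟩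
    · set Rr := r.toReal with hRrdef
      have hRr : R' < Rr := (ENNReal.toReal_lt_toReal hr'top h).mpr hr'
      have hm0 : 0 < (Rr - R') / R' := div_pos (by linarith) hR'0
      refine ⟨min δ₁ ((Rr - R') / R'), lt_min hδ₁0 hm0, min_le_left _ _, ?_⟩
      intro x hx0 hx
      have hm : min δ₁ ((Rr - R') / R') * R' ≤ Rr - R' := by
        rw [← le_div_iff₀ hR'0]
        exact min_le_right _ _
      have hmin0 : 0 ≤ min δ₁ ((Rr - R') / R') := le_min hδ₁0.le hm0.le
      have hlt : (1 + min δ₁ ((Rr - R') / R')) * x < Rr := by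
        nlinarith [mul_le_mul_of_nonneg_left hx.le hmin0]
      rw [← ENNReal.ofReal_toReal h]
      exact ENNReal.ofReal_lt_ofReal_iff (by linarith) |>.mpr hlt
  have hδ1 : δ < 1 := hδδ₁.trans_lt hδ₁1
  have hδτ : δ / (1 - δ) ≤ τ := by
    rw [div_le_iff₀ (by linarith)]
    have : δ * (1 + τ) ≤ τ := by
      rw [← le_div_iff₀ (by positivity)]
      exact hδδ₁
    nlinarith
  -- the inner sector is contained in the outer one
  have hsub' : Sector γ' r' ⊆ Sector γ r := by
    rintro z ⟨hz0, hzarg, hzr⟩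
    exact ⟨hz0, hzarg.trans hα'α, hzr.trans hr'⟩
  -- key inclusion of closed balls
  have hsub : ∀ z ∈ Sector γ' r',
      Metric.closedBall z (δ * ‖z‖) ⊆ Sector γ r := by
    rintro z ⟨hz0, hzarg, hzr⟩ w hw
    rw [Metric.mem_closedBall, Complex.dist_eq] at hw
    have habsz : 0 < ‖z‖ := norm_pos_iff.mpr hz0
    set u := w / z - 1 with hudef
    have hw' : w = z * (1 + u) := by
      rw [hudef, add_sub_cancel]; field_simp
    have hu : ‖u‖ ≤ δ := by
      have h'' : u = (w - z) / z := by rw [hudef, sub_div, div_self hz0]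
      rw [h'', norm_div, div_le_iff₀ habsz]
      exact hw
    have hure : |u.re| ≤ δ := (Complex.abs_re_le_norm u).trans hu
    have huim : |u.im| ≤ δ := (Complex.abs_im_le_norm u).trans hu
    have hre : 1 - δ ≤ (1 + u).re := by
      simp only [Complex.add_re, Complex.one_re]
      linarith [(abs_le.mp hure).1]
    have hre0 : 0 < (1 + u).re := by linarith
    have hv0 : (1 + u) ≠ 0 := fun h => by rw [h] at hre0; simp at hre0
    have him : |(1 + u).im| ≤ δ := by
      simpa [Complex.add_im] using huim
    -- bound on the argument of 1 + u
    have hargv : |Complex.arg (1 + u)| ≤ ε := by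
      have h2 : |Complex.arg (1 + u)| < Real.pi / 2 :=
        Complex.abs_arg_lt_pi_div_two_iff.mpr (Or.inl hre0)
      have h3 : Complex.arg (1 + u) = Real.arctan ((1 + u).im / (1 + u).re) := by
        rw [← Complex.tan_arg,
          Real.arctan_tan (abs_lt.mp h2).1 (abs_lt.mp h2).2]
      have ht : |(1 + u).im / (1 + u).re| ≤ τ := by
        rw [abs_div, abs_of_pos hre0]
        refine le_trans ?_ hδτ
        exact div_le_div₀ hδ0.le him (by linarith) hre
      rw [h3, ← hτε, abs_le]
      constructor
      · rw [← Real.arctan_neg]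
        exact Real.arctan_strictMono.monotone (by linarith [(abs_le.mp ht).1])
      · exact Real.arctan_strictMono.monotone (abs_le.mp ht).2
    have hsum : |Complex.arg z + Complex.arg (1 + u)| < α := by
      calc |Complex.arg z + Complex.arg (1 + u)|
          ≤ |Complex.arg z| + |Complex.arg (1 + u)| := abs_add_le _ _
        _ < α' + ε := by exact add_lt_add_of_lt_of_le hzarg hargv
        _ ≤ α := by linarith
    have hargw : Complex.arg w = Complex.arg z + Complex.arg (1 + u) := by
      rw [hw']
      exact Complex.arg_mul hz0 hv0 ⟨by linarith [(abs_lt.mp hsum).1, hαπ],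
        by linarith [(abs_lt.mp hsum).2, hαπ]⟩
    refine ⟨by rw [hw']; exact mul_ne_zero hz0 hv0, by rw [hargw]; exact hsum, ?_⟩
    -- norm condition
    have habsw : ‖w‖ ≤ (1 + δ) * ‖z‖ := by
      rw [hw', norm_mul]
      have : ‖1 + u‖ ≤ 1 + δ := by
        calc ‖1 + u‖ ≤ ‖(1:ℂ)‖ + ‖u‖ := norm_add_le _ _
          _ ≤ 1 + δ := by simpa using hu
      calc ‖z‖ * ‖1 + u‖ ≤ ‖z‖ * (1 + δ) := by
            exact mul_le_mul_of_nonneg_left this habsz.le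
        _ = (1 + δ) * ‖z‖ := by ring
    have hzR' : ‖z‖ < R' := by
      have h1 : ENNReal.ofReal ‖z‖ < r' := by
        rw [ofReal_norm]; exact hzr
      have := (ENNReal.ofReal_lt_iff_lt_toReal (norm_nonneg z) hr'top).mp h1
      exact this
    calc (‖w‖₊ : ℝ≥0∞) = ENNReal.ofReal (‖w‖) :=
          (ofReal_norm w).symm
      _ ≤ ENNReal.ofReal ((1 + δ) * ‖z‖) := ENNReal.ofReal_le_ofReal habsw
      _ < r := hδr _ (norm_nonneg z) hzR'
  -- the main Cauchy estimate, for an arbitrary shift k ≥ j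
  have key : ∀ (j k : ℕ), ∀ z ∈ Sector γ' r',
      ‖iteratedDeriv j f z‖ ≤ (Nat.factorial j : ℝ) *
        (c₁ * ((c₂ * (1 + δ) * ‖z‖) ^ k * M k)) / (δ * ‖z‖) ^ j := by
    intro j k z hz
    have hz0 : z ≠ 0 := hz.1
    have habsz : 0 < ‖z‖ := norm_pos_iff.mpr hz0
    have hR : 0 < δ * ‖z‖ := by positivity
    refine cauchy_deriv_est hR (hsub z hz) hf.1 ?_ j
    intro w hw
    have hwS := hsub z hz hw
    have hw0 : w ≠ 0 := hwS.1
    have habsw : 0 < ‖w‖ := norm_pos_iff.mpr hw0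
    refine (hbd w hwS).trans ?_
    have habsw' : ‖w‖ ≤ (1 + δ) * ‖z‖ := by
      rw [Metric.mem_closedBall, Complex.dist_eq] at hw
      calc ‖w‖ = ‖z + (w - z)‖ := by ring_nf
        _ ≤ ‖z‖ + ‖w - z‖ := norm_add_le _ _
        _ ≤ ‖z‖ + δ * ‖z‖ := by linarith
        _ = (1 + δ) * ‖z‖ := by ring
    have h5 : c₂ * ‖w‖ ≤ c₂ * (1 + δ) * ‖z‖ := by
      rw [mul_assoc]
      exact mul_le_mul_of_nonneg_left habsw' hc₂.le
    have := hFun_le_aux hpos (t := c₂ * ‖w‖) (s := c₂ * (1 + δ) * ‖z‖)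
      (by positivity) h5 k
    exact mul_le_mul_of_nonneg_left this hc₁.le
  constructor
  · -- AClass
    set σ := c₂ * (1 + δ) / δ with hσdef
    have hσ0 : 0 < σ := by positivity
    have hbound : ∀ (j : ℕ), ∀ z ∈ Sector γ' r',
        ‖iteratedDeriv j f z‖ ≤ c₁ * σ ^ j * (Nat.factorial j : ℝ) * M j := by
      intro j z hz
      have habsz : 0 < ‖z‖ := norm_pos_iff.mpr hz.1
      refine (key j j z hz).trans_eq ?_
      have hne : ((δ * ‖z‖) ^ j) ≠ 0 := by positivity
      have hfact : c₂ * (1 + δ) * ‖z‖ = σ * (δ * ‖z‖) := by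
        rw [hσdef]
        field_simp
      rw [hfact, mul_pow, div_eq_iff hne]
      ring
    refine ⟨⟨hf.1.mono hsub', fun j => ⟨c₁ * σ ^ j * (Nat.factorial j : ℝ) * M j,
      hbound j⟩⟩, c₁, hc₁, σ, hσ0, hbound⟩
  · -- FlatOn
    intro j
    rw [tendsto_zero_iff_norm_tendsto_zero]
    set K := c₁ * (c₂ * (1 + δ)) ^ (j + 1) * M (j + 1) * (Nat.factorial j : ℝ) / δ ^ j with hKdef
    have hb : ∀ z ∈ Sector γ' r', ‖iteratedDeriv j f z‖ ≤ K * ‖z‖ := by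
      intro z hz
      have habsz : 0 < ‖z‖ := norm_pos_iff.mpr hz.1
      refine (key j (j + 1) z hz).trans_eq ?_
      rw [hKdef]
      have h1 : (c₂ * (1 + δ) * ‖z‖) ^ (j + 1)
          = (c₂ * (1 + δ)) ^ (j + 1) * (‖z‖ ^ j * ‖z‖) := by
        rw [mul_pow, pow_succ (‖z‖) j]
      rw [h1, mul_pow]
      field_simp [hδ0.ne', habsz.ne']
      ring
    refine squeeze_zero' ?_ ?_ ?_ (g := fun z => K * ‖z‖)
    · filter_upwards with z using norm_nonneg _
    · exact eventually_mem_nhdsWithin.mono hb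
    · have hcont : Continuous (fun z : ℂ => K * ‖z‖) :=
        continuous_const.mul continuous_norm
      have h0 : Tendsto (fun z : ℂ => K * ‖z‖) (𝓝 0) (𝓝 0) := by
        have := hcont.tendsto (0 : ℂ)
        simpa using this
      exact h0.mono_left nhdsWithin_le_nhds
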